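/- arXiv:1103.2784 — 2 statements merged into one kernel-verified Lean document; each statement's English description precedes it below -/
import Mathlib

section
/- Let G act freely by isometries on a Λ-tree T with base point x, and suppose the based length function l(g) = d(x, gx) is regular. Then every nontrivial g ∈ G is conjugate in G to an element f whose axis A_f contains the base point x; equivalently, there exists u ∈ G with l(ugu⁻¹) = l_T(g). -/
variable {Λ X G : Type*}

/-- `d` is a `Λ`-metric on `X` (`Λ` an ordered abelian group). -/
structure IsLambdaMetric [AddCommGroup Λ] [LinearOrder Λ] [IsOrderedAddMonoid Λ] (d : X → X → Λ) : Prop where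
  nonneg : ∀ x y, 0 ≤ d x y
  eq_zero_iff : ∀ x y, d x y = 0 ↔ x = y
  symm : ∀ x y, d x y = d y x
  triangle : ∀ x y z, d x z ≤ d x y + d y z

/-- `S` is a segment with endpoints `x`, `y` in the `Λ`-metric space `(X, d)`:
the image of an isometry `α` from a closed interval `[a,b] ⊆ Λ`. -/
def IsSegment [AddCommGroup Λ] [LinearOrder Λ] [IsOrderedAddMonoid Λ] (d : X → X → Λ) (S : Set X) (x y : X) : Prop :=
  ∃ (a b : Λ) (α : Λ → X), a ≤ b ∧ α a = x ∧ α b = y ∧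
    (∀ s ∈ Set.Icc a b, ∀ t ∈ Set.Icc a b, d (α s) (α t) = |s - t|) ∧
    S = α '' Set.Icc a b

/-- `(X, d)` is a `Λ`-tree: a geodesic `Λ`-metric space in which (T2) the union
of two segments meeting in a single common endpoint is a segment, and (T3) the
intersection of two segments with a common endpoint is a segment. -/
structure IsLambdaTree [AddCommGroup Λ] [LinearOrder Λ] [IsOrderedAddMonoid Λ] (d : X → X → Λ) : Prop where
  metric : IsLambdaMetric d
  geodesic : ∀ x y : X, ∃ S : Set X, IsSegment d S x y
  union_seg : ∀ (S₁ S₂ : Set X) (x y p : X), IsSegment d S₁ p x → IsSegment d S₂ p y →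
      S₁ ∩ S₂ = {p} → IsSegment d (S₁ ∪ S₂) x y
  inter_seg : ∀ (S₁ S₂ : Set X) (x y z : X), IsSegment d S₁ x y → IsSegment d S₂ x z →
      ∃ w : X, IsSegment d (S₁ ∩ S₂) x w


section
variable [AddCommGroup Λ] [LinearOrder Λ] [IsOrderedAddMonoid Λ] {d : X → X → Λ} {S : Set X} {x y : X}

lemma IsSegment.mem_fst (h : IsSegment d S x y) : x ∈ S := by
  obtain ⟨a, b, α, hab, hax, hby, hiso, rfl⟩ := h
  exact ⟨a, ⟨le_refl a, hab⟩, hax⟩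

lemma IsSegment.mem_snd (h : IsSegment d S x y) : y ∈ S := by
  obtain ⟨a, b, α, hab, hax, hby, hiso, rfl⟩ := h
  exact ⟨b, ⟨hab, le_refl b⟩, hby⟩

lemma IsSegment.between (h : IsSegment d S x y) {p : X} (hp : p ∈ S) :
    d x p + d p y = d x y := by
  obtain ⟨a, b, α, hab, hax, hby, hiso, rfl⟩ := h
  obtain ⟨s, hs, rfl⟩ := hp
  have h1 : d x (α s) = s - a := by
    rw [← hax, hiso a ⟨le_refl a, hab⟩ s hs, abs_sub_comm, abs_of_nonneg (sub_nonneg.2 hs.1)]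
  have h2 : d (α s) y = b - s := by
    rw [← hby, hiso s hs b ⟨hab, le_refl b⟩, abs_sub_comm, abs_of_nonneg (sub_nonneg.2 hs.2)]
  have h3 : d x y = b - a := by
    rw [← hax, ← hby, hiso a ⟨le_refl a, hab⟩ b ⟨hab, le_refl b⟩, abs_sub_comm,
      abs_of_nonneg (sub_nonneg.2 hab)]
  rw [h1, h2, h3]; abel

lemma IsSegment.dist_eq (h : IsSegment d S x y) {p q : X} (hp : p ∈ S) (hq : q ∈ S) :
    d p q = |d x p - d x q| := by
  obtain ⟨a, b, α, hab, hax, hby, hiso, rfl⟩ := h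
  obtain ⟨s, hs, rfl⟩ := hp
  obtain ⟨t, ht, rfl⟩ := hq
  have h1 : d x (α s) = s - a := by
    rw [← hax, hiso a ⟨le_refl a, hab⟩ s hs, abs_sub_comm, abs_of_nonneg (sub_nonneg.2 hs.1)]
  have h2 : d x (α t) = t - a := by
    rw [← hax, hiso a ⟨le_refl a, hab⟩ t ht, abs_sub_comm, abs_of_nonneg (sub_nonneg.2 ht.1)]
  rw [h1, h2, hiso s hs t ht]
  congr 1; abel

/-- Median: for a segment `S` from `y` to `z` and any point `t`, there is `m ∈ S`
with `d y m + d m t = d y t` and `d z m + d m t = d z t`. -/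
lemma median (htree : IsLambdaTree d) {S : Set X} {y z : X}
    (hS : IsSegment d S y z) (t : X) :
    ∃ m ∈ S, d y m + d m t = d y t ∧ d z m + d m t = d z t := by
  obtain ⟨S₂, hS₂⟩ := htree.geodesic y t
  obtain ⟨w, hw⟩ := htree.inter_seg S S₂ y z t hS hS₂
  have hwmem : w ∈ S ∩ S₂ := hw.mem_snd
  refine ⟨w, hwmem.1, ?_, ?_⟩
  · exact hS₂.between hwmem.2
  -- the hard part: d z w + d w t = d z t
  -- build the two tails and apply union_seg
  obtain ⟨a, b, α, hab, hax, hby, hiso, hSeq⟩ := hS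
  obtain ⟨c, e, β, hce, hbc, hbe, hiso₂, hS₂eq⟩ := hS₂
  obtain ⟨s, hs, hws⟩ : ∃ s ∈ Set.Icc a b, α s = w := by
    have := hwmem.1; rw [hSeq] at this; obtain ⟨s, hs, h⟩ := this; exact ⟨s, hs, h⟩
  obtain ⟨r, hr, hwr⟩ : ∃ r ∈ Set.Icc c e, β r = w := by
    have := hwmem.2; rw [hS₂eq] at this; obtain ⟨r, hr, h⟩ := this; exact ⟨r, hr, h⟩
  set T₁ : Set X := α '' Set.Icc s b with hT₁def
  set T₂ : Set X := β '' Set.Icc r e with hT₂def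
  have hT₁ : IsSegment d T₁ w z :=
    ⟨s, b, α, hs.2, hws, hby, fun u hu v hv =>
      hiso u ⟨hs.1.trans hu.1, hu.2⟩ v ⟨hs.1.trans hv.1, hv.2⟩, rfl⟩
  have hT₂ : IsSegment d T₂ w t :=
    ⟨r, e, β, hr.2, hwr, hbe, fun u hu v hv =>
      hiso₂ u ⟨hr.1.trans hu.1, hu.2⟩ v ⟨hr.1.trans hv.1, hv.2⟩, rfl⟩
  have hT₁S : T₁ ⊆ S := by rw [hSeq]; exact Set.image_mono (f := α) (Set.Icc_subset_Icc hs.1 le_rfl)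
  have hT₂S : T₂ ⊆ S₂ := by rw [hS₂eq]; exact Set.image_mono (f := β) (Set.Icc_subset_Icc hr.1 le_rfl)
  have hkey : T₁ ∩ T₂ = {w} := by
    apply Set.eq_singleton_iff_unique_mem.2
    constructor
    · exact ⟨hT₁.mem_fst, hT₂.mem_fst⟩
    · rintro q ⟨hq₁, hq₂⟩
      have hqSS : q ∈ S ∩ S₂ := ⟨hT₁S hq₁, hT₂S hq₂⟩
      -- q on intersection segment y → w : d y q + d q w = d y w
      have e1 : d y q + d q w = d y w := hw.between hqSS
      -- q on tail T₁ : d y q = d y w + d w q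
      have e2 : d y q = d y w + d w q := by
        obtain ⟨v, hv, rfl⟩ := hq₁
        have hvab : v ∈ Set.Icc a b := ⟨hs.1.trans hv.1, hv.2⟩
        have q1 : d y (α v) = v - a := by
          rw [← hax, hiso a ⟨le_refl a, hab⟩ v hvab, abs_sub_comm,
            abs_of_nonneg (sub_nonneg.2 hvab.1)]
        have q2 : d y w = s - a := by
          rw [← hax, ← hws, hiso a ⟨le_refl a, hab⟩ s hs, abs_sub_comm,
            abs_of_nonneg (sub_nonneg.2 hs.1)]
        have q3 : d w (α v) = v - s := by
          rw [← hws, hiso s hs v hvab, abs_sub_comm, abs_of_nonneg (sub_nonneg.2 hv.1)]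
        rw [q1, q2, q3]; abel
      have hsymm : d q w = d w q := htree.metric.symm q w
      have h2 : d w q + d w q = 0 := by
        have h3 := e1; rw [e2, hsymm] at h3
        -- h3 : d y w + d w q + d w q = d y w
        have h0 : d y w + (d w q + d w q) = d y w + 0 := by
          rw [add_zero, ← add_assoc]; exact h3
        exact add_left_cancel h0
      have h4 : d w q = 0 := by
        have hle : d w q ≤ 0 := by
          calc d w q ≤ d w q + d w q := le_add_of_nonneg_left (htree.metric.nonneg w q)
          _ = 0 := h2
        exact le_antisymm hle (htree.metric.nonneg w q)
      exact ((htree.metric.eq_zero_iff w q).1 h4).symm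
  have hunion := htree.union_seg T₁ T₂ z t w hT₁ hT₂ hkey
  have hwmem' : w ∈ T₁ ∪ T₂ := Or.inl hT₁.mem_fst
  exact hunion.between hwmem'

/-- Four point condition (0-hyperbolicity) in a Λ-tree. -/
lemma four_point (htree : IsLambdaTree d) (w x y z : X) :
    d w x + d y z ≤ max (d w y + d x z) (d w z + d x y) := by
  obtain ⟨S, hS⟩ := htree.geodesic y z
  obtain ⟨m, hmS, hm1, hm2⟩ := median htree hS w
  obtain ⟨m', hm'S, hn1, hn2⟩ := median htree hS x
  have hbet : d y m + d m z = d y z := hS.between hmS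
  have hbet' : d y m' + d m' z = d y z := hS.between hm'S
  have hmm' : d m m' = |d y m - d y m'| := hS.dist_eq hmS hm'S
  have tri : d w x ≤ d w m + (d m m' + d m' x) :=
    le_trans (htree.metric.triangle w m x)
      (add_le_add_right (htree.metric.triangle m m' x) _)
  rcases le_total (d y m) (d y m') with hc | hc
  · refine le_trans ?_ (le_max_right _ _)
    have hdmm' : d m m' = d y m' - d y m := by
      rw [hmm', abs_sub_comm, abs_of_nonneg (sub_nonneg.2 hc)]
    have e1 : d w z = d z m + d m w := by rw [htree.metric.symm w z]; exact hm2.symm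
    have e2 : d x y = d y m' + d m' x := by rw [htree.metric.symm x y]; exact hn1.symm
    have e3 : d y z = d y m + d m z := hbet.symm
    calc d w x + d y z ≤ (d w m + (d m m' + d m' x)) + d y z := add_le_add_left tri _
      _ = d w z + d x y := by
          rw [hdmm', e1, e2, e3, htree.metric.symm w m, htree.metric.symm m z]; abel
  · refine le_trans ?_ (le_max_left _ _)
    have hdmm' : d m m' = d y m - d y m' := by
      rw [hmm', abs_of_nonneg (sub_nonneg.2 hc)]
    have e1 : d w y = d y m + d m w := by rw [htree.metric.symm w y]; exact hm1.symm
    have e2 : d x z = d z m' + d m' x := by rw [htree.metric.symm x z]; exact hn2.symm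
    have e3 : d y z = d y m' + d m' z := hbet'.symm
    calc d w x + d y z ≤ (d w m + (d m m' + d m' x)) + d y z := add_le_add_left tri _
      _ = d w y + d x z := by
          rw [hdmm', e1, e2, e3, htree.metric.symm w m, htree.metric.symm m' z]; abel

/-- If `p` lies between `g⁻¹ • p` and `g • p`, then `p` minimizes displacement. -/
lemma key_min {G : Type*} [Group G] [MulAction G X] {d : X → X → Λ}
    (htree : IsLambdaTree d) (hiso : ∀ (g : G) (x y : X), d (g • x) (g • y) = d x y)
    (g : G) (p : X)
    (hbetw : d (g⁻¹ • p) (g • p) = d (g⁻¹ • p) p + d p (g • p))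
    (t : X) : d p (g • p) ≤ d t (g • t) := by
  have e10 : d (g⁻¹ • p) p = d p (g • p) := by
    calc d (g⁻¹ • p) p = d (g • g⁻¹ • p) (g • p) := (hiso g _ _).symm
      _ = d p (g • p) := by rw [smul_inv_smul]
  have h4 := four_point htree (g⁻¹ • p) (g • p) p t
  rw [hbetw, e10, htree.metric.symm (g • p) p] at h4
  -- h4 : (l + l) + d p t ≤ max (l + d (g•p) t) (d (g⁻¹•p) t + l)
  rcases le_max_iff.1 h4 with h5 | h5
  · have h6 : d p (g • p) + d p t ≤ d (g • p) t := by
      have h5' : d p (g • p) + (d p (g • p) + d p t)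
          ≤ d p (g • p) + d (g • p) t := by
        calc d p (g • p) + (d p (g • p) + d p t)
            = d p (g • p) + d p (g • p) + d p t := by rw [add_assoc]
          _ ≤ d p (g • p) + d (g • p) t := h5
      exact (add_le_add_iff_left _).1 h5'
    have h10 : d p (g • p) + d p t ≤ d t (g • t) + d p t := by
      calc d p (g • p) + d p t ≤ d (g • p) t := h6
        _ ≤ d (g • p) (g • t) + d (g • t) t := htree.metric.triangle _ _ _
        _ = d p t + d t (g • t) := by rw [hiso g, htree.metric.symm (g • t) t]
        _ = d t (g • t) + d p t := add_comm _ _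
    exact (add_le_add_iff_right _).1 h10
  · have h6 : d p (g • p) + d p t ≤ d (g⁻¹ • p) t := by
      have h5' : d p (g • p) + (d p (g • p) + d p t)
          ≤ d p (g • p) + d (g⁻¹ • p) t := by
        calc d p (g • p) + (d p (g • p) + d p t)
            = d p (g • p) + d p (g • p) + d p t := by rw [add_assoc]
          _ ≤ d (g⁻¹ • p) t + d p (g • p) := h5
          _ = d p (g • p) + d (g⁻¹ • p) t := add_comm _ _
      exact (add_le_add_iff_left _).1 h5'
    have hgi : d (g⁻¹ • p) (g⁻¹ • t) = d p t := hiso g⁻¹ p t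
    have hgt : d (g⁻¹ • t) t = d t (g • t) := by
      calc d (g⁻¹ • t) t = d (g • g⁻¹ • t) (g • t) := (hiso g _ _).symm
        _ = d t (g • t) := by rw [smul_inv_smul]
    have h10 : d p (g • p) + d p t ≤ d t (g • t) + d p t := by
      calc d p (g • p) + d p t ≤ d (g⁻¹ • p) t := h6
        _ ≤ d (g⁻¹ • p) (g⁻¹ • t) + d (g⁻¹ • t) t := htree.metric.triangle _ _ _
        _ = d p t + d t (g • t) := by rw [hgi, hgt]
        _ = d t (g • t) + d p t := add_comm _ _
    exact (add_le_add_iff_right _).1 h10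

end

set_option maxHeartbeats 2000000 in
/-- let `G` act freely by isometries on a `Λ`-tree `(X,d)` with base
point `x`, with the based length function `l g = d x (g • x)` regular, and with
the translation length `lT` attained.  Then every nontrivial `g` is conjugate
to an element `u g u⁻¹` whose axis contains `x` (i.e. `l (u g u⁻¹) = lT (u g u⁻¹)`);
equivalently `l (u g u⁻¹) = lT g`. -/
theorem conjugate_axis_through_basepoint {G : Type*} [Group G] [MulAction G X]
    [AddCommGroup Λ] [LinearOrder Λ] [IsOrderedAddMonoid Λ] (d : X → X → Λ)
    (htree : IsLambdaTree d)
    (hiso : ∀ (g : G) (x y : X), d (g • x) (g • y) = d x y)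
    (hfree : ∀ g : G, g ≠ 1 → (∀ t : X, g • t ≠ t) ∧ ∀ t : X, (g * g) • t ≠ t)
    (x : X)
    (lT : G → Λ)
    (hlT : ∀ g : G, (∃ t : X, d t (g • t) = lT g) ∧ ∀ t : X, lT g ≤ d t (g • t))
    (hreg : ∀ g f : G, ∃ u g₁ f₁ : G,
      g = u * g₁ ∧ d x (g • x) = d x (u • x) + d x (g₁ • x) ∧
      f = u * f₁ ∧ d x (f • x) = d x (u • x) + d x (f₁ • x) ∧
      2 • d x (u • x) = d x (g • x) + d x (f • x) - d x ((g⁻¹ * f) • x)) :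
    ∀ g : G, g ≠ 1 → ∃ u : G,
      d x ((u * g * u⁻¹) • x) = lT (u * g * u⁻¹) ∧ lT (u * g * u⁻¹) = lT g := by
  intro g hg1
  obtain ⟨u₀, g₁, f₁, hg, h1, hf, h2, h3⟩ := hreg g g⁻¹
  have hg₁ : u₀⁻¹ * g = g₁ := by rw [hg, inv_mul_cancel_left]
  have hf₁ : u₀⁻¹ * g⁻¹ = f₁ := by rw [hf, inv_mul_cancel_left]
  have hdinv : ∀ h : G, d x (h⁻¹ • x) = d x (h • x) := by
    intro h
    calc d x (h⁻¹ • x) = d (h • x) (h • h⁻¹ • x) := (hiso h _ _).symm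
      _ = d (h • x) x := by rw [smul_inv_smul]
      _ = d x (h • x) := htree.metric.symm _ _
  have dshift : ∀ h k : G, d (h • x) (k • x) = d x ((h⁻¹ * k) • x) := by
    intro h k
    calc d (h • x) (k • x) = d (h⁻¹ • h • x) (h⁻¹ • k • x) := (hiso h⁻¹ _ _).symm
      _ = d x ((h⁻¹ * k) • x) := by rw [inv_smul_smul, mul_smul]
  have hm' : d x (f₁ • x) = d x (g₁ • x) := by
    have h2' := h2
    rw [hdinv g, h1] at h2'
    exact (add_left_cancel h2').symm
  -- basic distances; p = u₀ • x
  have e1 : d (u₀ • x) (g • x) = d x (g₁ • x) := by rw [dshift, hg₁]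
  have e2 : d (u₀ • x) (g⁻¹ • x) = d x (g₁ • x) := by rw [dshift, hf₁, hm']
  have e4 : d x (g • u₀ • x) = d x (g₁ • x) := by
    calc d x (g • u₀ • x) = d (g⁻¹ • x) (g⁻¹ • g • u₀ • x) := (hiso g⁻¹ _ _).symm
      _ = d (g⁻¹ • x) (u₀ • x) := by rw [inv_smul_smul]
      _ = d (u₀ • x) (g⁻¹ • x) := htree.metric.symm _ _
      _ = d x (g₁ • x) := e2
  have e5 : d (g • u₀ • x) (g • x) = d x (u₀ • x) := by
    rw [hiso g]; exact htree.metric.symm _ _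
  have e6 : d (g⁻¹ • u₀ • x) x = d x (g₁ • x) := by
    calc d (g⁻¹ • u₀ • x) x = d (g • g⁻¹ • u₀ • x) (g • x) := (hiso g _ _).symm
      _ = d (u₀ • x) (g • x) := by rw [smul_inv_smul]
      _ = d x (g₁ • x) := e1
  have e7 : d (g⁻¹ • x) (g⁻¹ • u₀ • x) = d x (u₀ • x) := hiso g⁻¹ x (u₀ • x)
  have e8 : d (g⁻¹ • x) (g • x) = d x (g₁ • x) + d x (g₁ • x) := by
    have c1 : d (g⁻¹ • x) (g • x) = d x ((g * g) • x) := by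
      rw [dshift]
      congr 2
      group
    have c2 : d x ((g * g) • x) = d x ((g⁻¹ * g⁻¹) • x) := by
      rw [← hdinv (g * g), mul_inv_rev]
    have hA := h3
    rw [hdinv g, h1] at hA
    have h4 := eq_sub_iff_add_eq.1 hA
    have h5 : 2 • d x (u₀ • x) + (d x (g₁ • x) + d x (g₁ • x))
        = (d x (u₀ • x) + d x (g₁ • x)) + (d x (u₀ • x) + d x (g₁ • x)) := by
      rw [two_nsmul]; abel
    rw [c1, c2]
    exact add_left_cancel (h4.trans h5.symm)
  have e10 : d (g⁻¹ • u₀ • x) (u₀ • x) = d (u₀ • x) (g • u₀ • x) := by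
    calc d (g⁻¹ • u₀ • x) (u₀ • x) = d (g • g⁻¹ • u₀ • x) (g • u₀ • x) := (hiso g _ _).symm
      _ = d (u₀ • x) (g • u₀ • x) := by rw [smul_inv_smul]
  -- four point estimate for l = d p (g•p)
  have e11 : d (u₀ • x) (g • u₀ • x) + d x (g • x)
      ≤ max (d x (u₀ • x) + d x (u₀ • x)) (d x (g₁ • x) + d x (g₁ • x)) := by
    have h4 := four_point htree (u₀ • x) (g • u₀ • x) x (g • x)
    rw [htree.metric.symm (u₀ • x) x] at h4
    rw [htree.metric.symm (g • u₀ • x) x] at h4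
    rwa [e5, e1, e4] at h4
  -- conjugation invariance of lT
  have hconj : lT (u₀⁻¹ * g * u₀⁻¹⁻¹) = lT g := by
    apply le_antisymm
    · obtain ⟨t, ht⟩ := (hlT g).1
      have he : d t (g • t) = d (u₀⁻¹ • t) ((u₀⁻¹ * g * u₀⁻¹⁻¹) • u₀⁻¹ • t) := by
        calc d t (g • t) = d (u₀⁻¹ • t) (u₀⁻¹ • g • t) := (hiso u₀⁻¹ _ _).symm
          _ = d (u₀⁻¹ • t) ((u₀⁻¹ * g * u₀⁻¹⁻¹) • u₀⁻¹ • t) := by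
              rw [← mul_smul, ← mul_smul]
              have : u₀⁻¹ * g = (u₀⁻¹ * g * u₀⁻¹⁻¹) * u₀⁻¹ := by group
              rw [← this]
      calc lT (u₀⁻¹ * g * u₀⁻¹⁻¹)
          ≤ d (u₀⁻¹ • t) ((u₀⁻¹ * g * u₀⁻¹⁻¹) • u₀⁻¹ • t) :=
            (hlT (u₀⁻¹ * g * u₀⁻¹⁻¹)).2 (u₀⁻¹ • t)
        _ = d t (g • t) := he.symm
        _ = lT g := ht
    · obtain ⟨t, ht⟩ := (hlT (u₀⁻¹ * g * u₀⁻¹⁻¹)).1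
      have he : d t ((u₀⁻¹ * g * u₀⁻¹⁻¹) • t) = d (u₀ • t) (g • u₀ • t) := by
        calc d t ((u₀⁻¹ * g * u₀⁻¹⁻¹) • t)
            = d (u₀ • t) (u₀ • (u₀⁻¹ * g * u₀⁻¹⁻¹) • t) := (hiso u₀ _ _).symm
          _ = d (u₀ • t) (g • u₀ • t) := by
              rw [← mul_smul]
              have : u₀ * (u₀⁻¹ * g * u₀⁻¹⁻¹) = g * u₀ := by group
              rw [this, mul_smul]
      calc lT g ≤ d (u₀ • t) (g • u₀ • t) := (hlT g).2 (u₀ • t)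
        _ = d t ((u₀⁻¹ * g * u₀⁻¹⁻¹) • t) := he.symm
        _ = lT (u₀⁻¹ * g * u₀⁻¹⁻¹) := ht
  rcases le_total (d x (u₀ • x)) (d x (g₁ • x)) with hm | hm
  · -- main case: the conjugate works
    have hmax : max (d x (u₀ • x) + d x (u₀ • x)) (d x (g₁ • x) + d x (g₁ • x))
        = d x (g₁ • x) + d x (g₁ • x) := max_eq_right (add_le_add hm hm)
    have hll : d (u₀ • x) (g • u₀ • x) + d x (u₀ • x) ≤ d x (g₁ • x) := by
      have h4 : d (u₀ • x) (g • u₀ • x) + d x (u₀ • x) + d x (g₁ • x)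
          ≤ d x (g₁ • x) + d x (g₁ • x) := by
        calc d (u₀ • x) (g • u₀ • x) + d x (u₀ • x) + d x (g₁ • x)
            = d (u₀ • x) (g • u₀ • x) + (d x (u₀ • x) + d x (g₁ • x)) := by rw [add_assoc]
          _ = d (u₀ • x) (g • u₀ • x) + d x (g • x) := by rw [← h1]
          _ ≤ d x (g₁ • x) + d x (g₁ • x) := by rw [← hmax]; exact e11
      exact (add_le_add_iff_right _).1 h4
    -- betweenness : d (g⁻¹ p) (g p) = d (g⁻¹ p) p + d p (g p)
    have hbetw : d (g⁻¹ • u₀ • x) (g • u₀ • x)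
        = d (g⁻¹ • u₀ • x) (u₀ • x) + d (u₀ • x) (g • u₀ • x) := by
      apply le_antisymm
      · exact htree.metric.triangle _ _ _
      · -- lower bound via d (g⁻¹ x) (g x) = 2m
        have lb : d x (g₁ • x) + d x (g₁ • x)
            ≤ d x (u₀ • x) + d (g⁻¹ • u₀ • x) (g • u₀ • x) + d x (u₀ • x) := by
          calc d x (g₁ • x) + d x (g₁ • x) = d (g⁻¹ • x) (g • x) := e8.symm
            _ ≤ d (g⁻¹ • x) (g⁻¹ • u₀ • x) + d (g⁻¹ • u₀ • x) (g • x) :=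
                htree.metric.triangle _ _ _
            _ ≤ d (g⁻¹ • x) (g⁻¹ • u₀ • x) +
                (d (g⁻¹ • u₀ • x) (g • u₀ • x) + d (g • u₀ • x) (g • x)) :=
                add_le_add_right (htree.metric.triangle _ _ _) _
            _ = d x (u₀ • x) + d (g⁻¹ • u₀ • x) (g • u₀ • x) + d x (u₀ • x) := by
                rw [e7, e5]; abel
        have lb2 : (d (u₀ • x) (g • u₀ • x) + d x (u₀ • x)) +
            (d (u₀ • x) (g • u₀ • x) + d x (u₀ • x))
            ≤ d (g⁻¹ • u₀ • x) (g • u₀ • x) + (d x (u₀ • x) + d x (u₀ • x)) := by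
          calc (d (u₀ • x) (g • u₀ • x) + d x (u₀ • x)) +
              (d (u₀ • x) (g • u₀ • x) + d x (u₀ • x))
              ≤ d x (g₁ • x) + d x (g₁ • x) := add_le_add hll hll
            _ ≤ d x (u₀ • x) + d (g⁻¹ • u₀ • x) (g • u₀ • x) + d x (u₀ • x) := lb
            _ = d (g⁻¹ • u₀ • x) (g • u₀ • x) + (d x (u₀ • x) + d x (u₀ • x)) := by abel
        have lb3 : d (u₀ • x) (g • u₀ • x) + d (u₀ • x) (g • u₀ • x)
            ≤ d (g⁻¹ • u₀ • x) (g • u₀ • x) := by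
          have hre : (d (u₀ • x) (g • u₀ • x) + d x (u₀ • x)) +
              (d (u₀ • x) (g • u₀ • x) + d x (u₀ • x))
              = (d (u₀ • x) (g • u₀ • x) + d (u₀ • x) (g • u₀ • x)) +
                (d x (u₀ • x) + d x (u₀ • x)) := by abel
          have h6 := lb2
          rw [hre] at h6
          exact (add_le_add_iff_right _).1 h6
        calc d (g⁻¹ • u₀ • x) (u₀ • x) + d (u₀ • x) (g • u₀ • x)
            = d (u₀ • x) (g • u₀ • x) + d (u₀ • x) (g • u₀ • x) := by rw [e10]
          _ ≤ d (g⁻¹ • u₀ • x) (g • u₀ • x) := lb3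
    -- p minimizes displacement, so d p (g p) = lT g
    obtain ⟨t₀, ht₀⟩ := (hlT g).1
    have hlel : d (u₀ • x) (g • u₀ • x) ≤ lT g := by
      rw [← ht₀]; exact key_min htree hiso g (u₀ • x) hbetw t₀
    have hgel : lT g ≤ d (u₀ • x) (g • u₀ • x) := (hlT g).2 (u₀ • x)
    have hl : d (u₀ • x) (g • u₀ • x) = lT g := le_antisymm hlel hgel
    refine ⟨u₀⁻¹, ?_, hconj⟩
    have hx : d x ((u₀⁻¹ * g * u₀⁻¹⁻¹) • x) = d (u₀ • x) (g • u₀ • x) := by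
      calc d x ((u₀⁻¹ * g * u₀⁻¹⁻¹) • x)
          = d (u₀ • x) (u₀ • (u₀⁻¹ * g * u₀⁻¹⁻¹) • x) := (hiso u₀ _ _).symm
        _ = d (u₀ • x) (g • u₀ • x) := by
            rw [← mul_smul]
            have : u₀ * (u₀⁻¹ * g * u₀⁻¹⁻¹) = g * u₀ := by group
            rw [this, mul_smul]
    rw [hx, hl, hconj]
  · -- degenerate case: contradiction with freeness of g²
    exfalso
    have hmax : max (d x (u₀ • x) + d x (u₀ • x)) (d x (g₁ • x) + d x (g₁ • x))
        = d x (u₀ • x) + d x (u₀ • x) := max_eq_left (add_le_add hm hm)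
    have hup : d (u₀ • x) (g • u₀ • x) + d x (g₁ • x) ≤ d x (u₀ • x) := by
      have h4 : d (u₀ • x) (g • u₀ • x) + d x (g₁ • x) + d x (u₀ • x)
          ≤ d x (u₀ • x) + d x (u₀ • x) := by
        calc d (u₀ • x) (g • u₀ • x) + d x (g₁ • x) + d x (u₀ • x)
            = d (u₀ • x) (g • u₀ • x) + (d x (u₀ • x) + d x (g₁ • x)) := by abel
          _ = d (u₀ • x) (g • u₀ • x) + d x (g • x) := by rw [← h1]
          _ ≤ d x (u₀ • x) + d x (u₀ • x) := by rw [← hmax]; exact e11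
      exact (add_le_add_iff_right _).1 h4
    have hlo : d x (u₀ • x) ≤ d x (g₁ • x) + d (u₀ • x) (g • u₀ • x) := by
      calc d x (u₀ • x) ≤ d x (g • u₀ • x) + d (g • u₀ • x) (u₀ • x) :=
            htree.metric.triangle _ _ _
        _ = d x (g₁ • x) + d (u₀ • x) (g • u₀ • x) := by
            rw [e4, htree.metric.symm (g • u₀ • x) (u₀ • x)]
    have heq : d x (g₁ • x) + d (u₀ • x) (g • u₀ • x) = d x (u₀ • x) :=
      le_antisymm (by rw [add_comm]; exact hup) hlo
    -- four point on (g⁻¹ p, g p, x, p)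
    have h4 := four_point htree (g⁻¹ • u₀ • x) (g • u₀ • x) x (u₀ • x)
    rw [e6, htree.metric.symm (g • u₀ • x) (u₀ • x), ← e10,
      htree.metric.symm (g • u₀ • x) x, e4, e10] at h4
    -- h4 : D + d x p ≤ max (m + l) (l + m)
    have hmax2 : max (d x (g₁ • x) + d (u₀ • x) (g • u₀ • x))
        (d (u₀ • x) (g • u₀ • x) + d x (g₁ • x)) = d x (u₀ • x) := by
      rw [add_comm (d (u₀ • x) (g • u₀ • x)) (d x (g₁ • x)), max_self, heq]
    rw [hmax2] at h4
    -- h4 : d (g⁻¹ p) (g p) + d x p ≤ d x p, so D ≤ 0, so D = 0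
    have hD0 : d (g⁻¹ • u₀ • x) (g • u₀ • x) = 0 := by
      have hle : d (g⁻¹ • u₀ • x) (g • u₀ • x) ≤ 0 := by
        have h5 : d (g⁻¹ • u₀ • x) (g • u₀ • x) + d x (u₀ • x) ≤ 0 + d x (u₀ • x) := by
          rw [zero_add]; exact h4
        exact (add_le_add_iff_right _).1 h5
      exact le_antisymm hle (htree.metric.nonneg _ _)
    have hpq : g⁻¹ • u₀ • x = g • u₀ • x := (htree.metric.eq_zero_iff _ _).1 hD0
    have : (g * g) • u₀ • x = u₀ • x := by
      have := congrArg (fun y => g • y) hpq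
      simp only [smul_inv_smul] at this
      rw [mul_smul]
      exact this.symm
    exact (hfree g hg1).2 (u₀ • x) this
end

section
/- Let G be a group acting freely on a ℤⁿ-tree with a regular based length function, and let à be an abelian subgroup of G. Then à is conjugate in G to an abelian subgroup A such that every element of A is cyclically reduced (i.e., the axis of every nontrivial element of A passes through the base point). -/
variable {Λ X G : Type*}

set_option linter.unusedSectionVars false

namespace S6

variable [AddCommGroup Λ] [LinearOrder Λ] [IsOrderedAddMonoid Λ]

/-- metric betweenness -/
def Btw (d : X → X → Λ) (p q r : X) : Prop := d p q + d q r = d p r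

/-- doubled Gromov product -/
def gr (d : X → X → Λ) (p u v : X) : Λ := d p u + d p v - d u v

section Tree

variable {d : X → X → Λ}

theorem dnn (ht : IsLambdaTree d) (x y : X) : 0 ≤ d x y := ht.metric.nonneg x y
theorem dsy (ht : IsLambdaTree d) (x y : X) : d x y = d y x := ht.metric.symm x y
theorem dself (ht : IsLambdaTree d) (x : X) : d x x = 0 := (ht.metric.eq_zero_iff x x).2 rfl
theorem deq (ht : IsLambdaTree d) {x y : X} (h : d x y = 0) : x = y := (ht.metric.eq_zero_iff x y).1 h

theorem btw_symm (ht : IsLambdaTree d) {p q r : X} (h : Btw d p q r) : Btw d r q p := by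
  unfold Btw at h ⊢
  rw [dsy ht r q, dsy ht q p, dsy ht r p, add_comm]
  exact h

theorem btw_self_left (ht : IsLambdaTree d) (p r : X) : Btw d p p r := by
  unfold Btw; rw [dself ht, zero_add]

theorem btw_self_right (ht : IsLambdaTree d) (p r : X) : Btw d p r r := by
  unfold Btw; rw [dself ht, add_zero]

theorem gr_nonneg (ht : IsLambdaTree d) (p u v : X) : 0 ≤ gr d p u v := by
  unfold gr
  have h := ht.metric.triangle u p v
  rw [dsy ht u p] at h
  exact sub_nonneg.2 h

theorem gr_comm (ht : IsLambdaTree d) (p u v : X) : gr d p u v = gr d p v u := by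
  unfold gr; rw [dsy ht u v]; abel

theorem btw_of_gr_zero (ht : IsLambdaTree d) {p u v : X} (h : gr d p u v = 0) : Btw d u p v := by
  unfold gr at h; unfold Btw
  rw [dsy ht u p]
  exact sub_eq_zero.1 h

theorem gr_eq_zero_of_btw (ht : IsLambdaTree d) {p u v : X} (h : Btw d u p v) : gr d p u v = 0 := by
  unfold Btw at h; unfold gr
  rw [dsy ht p u]
  rw [← h]; abel

end Tree

section Seg

variable {d : X → X → Λ} (ht : IsLambdaTree d) {S : Set X} {p q : X}

theorem seg_mem_left (hS : IsSegment d S p q) : p ∈ S := by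
  obtain ⟨a, b, α, hab, hpa, hqb, _, rfl⟩ := hS
  exact ⟨a, ⟨le_refl a, hab⟩, hpa⟩

theorem seg_mem_right (hS : IsSegment d S p q) : q ∈ S := by
  obtain ⟨a, b, α, hab, hpa, hqb, _, rfl⟩ := hS
  exact ⟨b, ⟨hab, le_refl b⟩, hqb⟩

theorem seg_btw (hS : IsSegment d S p q) {z : X} (hz : z ∈ S) : Btw d p z q := by
  obtain ⟨a, b, α, hab, hpa, hqb, hi, rfl⟩ := hS
  obtain ⟨s, hs, rfl⟩ := hz
  have ha : a ∈ Set.Icc a b := ⟨le_refl a, hab⟩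
  have hb : b ∈ Set.Icc a b := ⟨hab, le_refl b⟩
  unfold Btw
  rw [← hpa, ← hqb, hi a ha s hs, hi s hs b hb, hi a ha b hb]
  rw [abs_sub_comm a s, abs_of_nonneg (sub_nonneg.2 hs.1),
    abs_of_nonpos (sub_nonpos.2 hs.2), abs_of_nonpos (sub_nonpos.2 hab)]
  abel

theorem seg_pair (hS : IsSegment d S p q) {z₁ z₂ : X} (h1 : z₁ ∈ S) (h2 : z₂ ∈ S) :
    d z₁ z₂ = |d p z₁ - d p z₂| := by
  obtain ⟨a, b, α, hab, hpa, hqb, hi, rfl⟩ := hS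
  obtain ⟨s₁, hs₁, rfl⟩ := h1
  obtain ⟨s₂, hs₂, rfl⟩ := h2
  have ha : a ∈ Set.Icc a b := ⟨le_refl a, hab⟩
  rw [← hpa, hi s₁ hs₁ s₂ hs₂, hi a ha s₁ hs₁, hi a ha s₂ hs₂,
    abs_sub_comm a s₁, abs_of_nonneg (sub_nonneg.2 hs₁.1),
    abs_sub_comm a s₂, abs_of_nonneg (sub_nonneg.2 hs₂.1)]
  congr 1
  abel

theorem seg_pt (hS : IsSegment d S p q) {c : Λ} (h0 : 0 ≤ c) (hc : c ≤ d p q) :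
    ∃ w ∈ S, d p w = c := by
  obtain ⟨a, b, α, hab, hpa, hqb, hi, rfl⟩ := hS
  have ha : a ∈ Set.Icc a b := ⟨le_refl a, hab⟩
  have hb : b ∈ Set.Icc a b := ⟨hab, le_refl b⟩
  have hdpq : d p q = b - a := by
    rw [← hpa, ← hqb, hi a ha b hb, abs_of_nonpos (sub_nonpos.2 hab)]; abel
  have hmem : a + c ∈ Set.Icc a b := by
    constructor
    · exact le_add_of_nonneg_right h0
    · rw [hdpq] at hc
      exact add_le_of_le_sub_left hc
  refine ⟨α (a + c), ⟨a + c, hmem, rfl⟩, ?_⟩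
  rw [← hpa, hi a ha (a + c) hmem]
  rw [show a - (a + c) = -c by abel, abs_neg, abs_of_nonneg h0]

theorem exists_median_on (ht : IsLambdaTree d) (hS : IsSegment d S p q) (r : X) :
    ∃ m ∈ S, Btw d p m q ∧ Btw d p m r ∧ Btw d q m r := by
  obtain ⟨S₂, hS₂⟩ := ht.geodesic p r
  obtain ⟨w, hw⟩ := ht.inter_seg S S₂ p q r hS hS₂
  have hwS : w ∈ S ∩ S₂ := seg_mem_right hw
  refine ⟨w, hwS.1, seg_btw hS hwS.1, seg_btw hS₂ hwS.2, ?_⟩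
  obtain ⟨a, b, α, hab, hpa, hqb, hi, hSeq⟩ := hS
  obtain ⟨a₂, b₂, α₂, hab₂, hpa₂, hrb₂, hi₂, hSeq₂⟩ := hS₂
  obtain ⟨t, htm, hαt⟩ : w ∈ α '' Set.Icc a b := by rw [← hSeq]; exact hwS.1
  obtain ⟨t₂, htm₂, hαt₂⟩ : w ∈ α₂ '' Set.Icc a₂ b₂ := by rw [← hSeq₂]; exact hwS.2
  set S1' := α '' Set.Icc t b with hS1'def
  set S2' := α₂ '' Set.Icc t₂ b₂ with hS2'def
  have h1' : IsSegment d S1' w q :=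
    ⟨t, b, α, htm.2, hαt, hqb,
      fun s hs s' hs' => hi s ⟨le_trans htm.1 hs.1, hs.2⟩ s' ⟨le_trans htm.1 hs'.1, hs'.2⟩, rfl⟩
  have h2' : IsSegment d S2' w r :=
    ⟨t₂, b₂, α₂, htm₂.2, hαt₂, hrb₂,
      fun s hs s' hs' => hi₂ s ⟨le_trans htm₂.1 hs.1, hs.2⟩ s' ⟨le_trans htm₂.1 hs'.1, hs'.2⟩, rfl⟩
  have hsub1 : S1' ⊆ S := by
    rw [hSeq]; exact Set.image_mono (Set.Icc_subset_Icc htm.1 (le_refl b))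
  have hsub2 : S2' ⊆ S₂ := by
    rw [hSeq₂]; exact Set.image_mono (Set.Icc_subset_Icc htm₂.1 (le_refl b₂))
  have hint : S1' ∩ S2' = {w} := by
    ext z
    simp only [Set.mem_inter_iff, Set.mem_singleton_iff]
    constructor
    · rintro ⟨hz1, hz2⟩
      have hb1 : Btw d p z w := seg_btw hw ⟨hsub1 hz1, hsub2 hz2⟩
      have hb2 : Btw d w z q := seg_btw h1' hz1
      have hb3 : Btw d p z q := seg_btw ⟨a, b, α, hab, hpa, hqb, hi, hSeq⟩ (hsub1 hz1)
      have hb4 : Btw d p w q := seg_btw ⟨a, b, α, hab, hpa, hqb, hi, hSeq⟩ hwS.1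
      unfold Btw at hb1 hb2 hb3 hb4
      have e : d z w + d z w + (d p z + d z q) = 0 + (d p z + d z q) := by
        calc d z w + d z w + (d p z + d z q)
            = (d p z + d z w) + (d z w + d z q) := by abel
          _ = d p w + (d w z + d z q) := by rw [hb1, dsy ht z w]
          _ = d p w + d w q := by rw [hb2]
          _ = d p q := hb4
          _ = 0 + (d p z + d z q) := by rw [zero_add, hb3]
      have h2 := add_right_cancel e
      have : d z w = 0 := by
        have h3 := add_le_add_right (dnn ht z w) (d z w)
        rw [add_zero, h2] at h3
        exact le_antisymm h3 (dnn ht z w)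
      exact deq ht this
    · rintro rfl
      exact ⟨⟨t, ⟨le_refl t, htm.2⟩, hαt⟩, ⟨t₂, ⟨le_refl t₂, htm₂.2⟩, hαt₂⟩⟩
  have hu := ht.union_seg S1' S2' q r w h1' h2' hint
  exact seg_btw hu (Or.inl (seg_mem_left h1'))

end Seg

section Med

variable {d : X → X → Λ} (ht : IsLambdaTree d)

theorem exists_median (ht : IsLambdaTree d) (p q r : X) :
    ∃ m, Btw d p m q ∧ Btw d p m r ∧ Btw d q m r := by
  obtain ⟨S, hS⟩ := ht.geodesic p q
  obtain ⟨m, _, h⟩ := exists_median_on ht hS r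
  exact ⟨m, h⟩

/-- the isosceles (0-hyperbolicity) inequality -/
theorem isoc (ht : IsLambdaTree d) (p u v z : X) : min (gr d p u z) (gr d p v z) ≤ gr d p u v := by
  obtain ⟨S, hS⟩ := ht.geodesic p z
  obtain ⟨mu, hmuS, hmu1, hmu2, hmu3⟩ := exists_median_on ht hS u
  obtain ⟨mv, hmvS, hmv1, hmv2, hmv3⟩ := exists_median_on ht hS v
  have guz : gr d p u z = d p mu + d p mu := by
    unfold gr
    unfold Btw at hmu1 hmu2 hmu3
    rw [dsy ht u z, ← hmu2, ← hmu1, ← hmu3, dsy ht z mu]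
    abel
  have gvz : gr d p v z = d p mv + d p mv := by
    unfold gr
    unfold Btw at hmv1 hmv2 hmv3
    rw [dsy ht v z, ← hmv2, ← hmv1, ← hmv3, dsy ht z mv]
    abel
  have key : ∀ u v m m' : X, Btw d p m u → Btw d p m' v → d m m' = d p m' - d p m →
      d p m + d p m ≤ gr d p u v := by
    intro u v m m' h1 h2 hmm
    unfold Btw at h1 h2
    have htri : d u v ≤ d m u + (d m m' + d m' v) := by
      calc d u v = d v u := dsy ht u v
        _ ≤ d v m' + d m' u := ht.metric.triangle v m' u
        _ ≤ d v m' + (d m' m + d m u) := by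
            exact add_le_add_right (ht.metric.triangle m' m u) _
        _ = d m u + (d m m' + d m' v) := by
            rw [dsy ht v m', dsy ht m' m]; abel
    have : gr d p u v ≥ d p u + d p v - (d m u + (d m m' + d m' v)) :=
      sub_le_sub_left htri _
    refine le_trans (le_of_eq ?_) this
    rw [← h1, ← h2, hmm]
    abel
  rcases le_total (d p mu) (d p mv) with hle | hle
  · have hmm : d mu mv = d p mv - d p mu := by
      rw [seg_pair hS hmuS hmvS, abs_sub_comm, abs_of_nonneg (sub_nonneg.2 hle)]
    calc min (gr d p u z) (gr d p v z) ≤ gr d p u z := min_le_left _ _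
      _ = d p mu + d p mu := guz
      _ ≤ gr d p u v := key u v mu mv hmu2 hmv2 hmm
  · have hmm : d mv mu = d p mu - d p mv := by
      rw [seg_pair hS hmvS hmuS, abs_sub_comm, abs_of_nonneg (sub_nonneg.2 hle)]
    calc min (gr d p u z) (gr d p v z) ≤ gr d p v z := min_le_right _ _
      _ = d p mv + d p mv := gvz
      _ ≤ gr d p v u := key v u mv mu hmv2 hmu2 hmm
      _ = gr d p u v := (gr_comm ht p v u)

theorem btw_le_right (ht : IsLambdaTree d) (p z r : X) (h : Btw d p z r) : d p z ≤ d p r := by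
  unfold Btw at h
  rw [← h]
  exact le_add_of_nonneg_right (dnn ht z r)

theorem cmp (ht : IsLambdaTree d) {p r z₁ z₂ : X} (h1 : Btw d p z₁ r) (h2 : Btw d p z₂ r) :
    d z₁ z₂ = |d p z₁ - d p z₂| := by
  obtain ⟨S, hS⟩ := ht.geodesic p r
  have key : ∀ z, Btw d p z r → ∃ w ∈ S, d p w = d p z ∧ z = w := by
    intro z hz
    obtain ⟨w, hwS, hw⟩ := seg_pt hS (dnn ht p z) (btw_le_right ht p z r hz)
    refine ⟨w, hwS, hw, ?_⟩
    have hbw : Btw d p w r := seg_btw hS hwS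
    have g1 : gr d p z r = d p z + d p z := by
      unfold gr; unfold Btw at hz; rw [← hz]; abel
    have g2 : gr d p w r = d p w + d p w := by
      unfold gr; unfold Btw at hbw; rw [← hbw]; abel
    have hmin := isoc ht p z w r
    rw [g1, g2, hw, min_self] at hmin
    unfold gr at hmin
    rw [hw] at hmin
    have hzw : d z w ≤ 0 := by
      have h3 := le_sub_iff_add_le.1 hmin
      have h4 : (d p z + d p z) + d z w ≤ (d p z + d p z) + 0 := by rwa [add_zero]
      exact le_of_add_le_add_left h4
    exact deq ht (le_antisymm hzw (dnn ht z w))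
  obtain ⟨w₁, hw₁S, hw₁, rfl⟩ := key z₁ h1
  obtain ⟨w₂, hw₂S, hw₂, rfl⟩ := key z₂ h2
  rw [seg_pair hS hw₁S hw₂S]

theorem fourpt (ht : IsLambdaTree d) (a b c e : X) : d a b + d c e ≤ max (d a c + d b e) (d a e + d b c) := by
  have h := isoc ht a c e b
  rcases min_le_iff.1 h with h' | h'
  · refine le_max_of_le_right ?_
    unfold gr at h'
    have h2 := sub_le_sub_iff.1 h'
    have h3 : d a c + d a b + d c e = d a c + (d a b + d c e) := by abel
    have h4 : d a c + d a e + d c b = d a c + (d a e + d c b) := by abel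
    rw [h3, h4] at h2
    have h5 := le_of_add_le_add_left h2
    rw [dsy ht b c]
    exact h5
  · refine le_max_of_le_left ?_
    unfold gr at h'
    have h2 := sub_le_sub_iff.1 h'
    have h3 : d a e + d a b + d c e = d a e + (d a b + d c e) := by abel
    have h4 : d a c + d a e + d e b = d a e + (d a c + d e b) := by abel
    rw [h3, h4] at h2
    have h5 := le_of_add_le_add_left h2
    rwa [dsy ht e b] at h5

end Med

section Action

variable [Group G] [MulAction G X] {d : X → X → Λ}

theorem dmove (hiso : ∀ (g : G) (x y : X), d (g • x) (g • y) = d x y)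
    (g : G) (x y : X) : d x (g • y) = d (g⁻¹ • x) y := by
  have h := hiso g (g⁻¹ • x) y
  rw [smul_inv_smul] at h
  exact h

theorem dinv (ht : IsLambdaTree d) (hiso : ∀ (g : G) (x y : X), d (g • x) (g • y) = d x y)
    (g : G) (x : X) : d x (g⁻¹ • x) = d x (g • x) := by
  rw [dmove hiso g⁻¹ x x, inv_inv, dsy ht]

theorem min_of_doubling (ht : IsLambdaTree d)
    (hiso : ∀ (g : G) (x y : X), d (g • x) (g • y) = d x y) (g : G) (y t : X)
    (hdb : d y ((g * g) • y) = d y (g • y) + d y (g • y)) :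
    d y (g • y) ≤ d t (g • t) := by
  have h4 := fourpt ht y ((g * g) • y) (g • t) (g • y)
  have r1 : d (g • t) (g • y) = d t y := hiso g t y
  have r2 : d ((g * g) • y) (g • y) = d y (g • y) := by
    rw [mul_smul, hiso g (g • y) y, dsy ht]
  have r3 : d ((g * g) • y) (g • t) = d (g • y) t := by
    rw [mul_smul, hiso g (g • y) t]
  rw [hdb, r1, r2, r3] at h4
  rcases le_max_iff.1 h4 with h | h
  · have tri := ht.metric.triangle y t (g • t)
    have h2 : d y (g • y) + d y (g • y) + d t y ≤ d y t + d t (g • t) + d y (g • y) :=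
      le_trans h (add_le_add_left tri _)
    have e1 : d y (g • y) + d y (g • y) + d t y
        = (d y (g • y) + d t y) + d y (g • y) := by abel
    have e2 : d y t + d t (g • t) + d y (g • y)
        = (d y (g • y) + d t y) + d t (g • t) := by rw [dsy ht y t]; abel
    rw [e1, e2] at h2
    exact le_of_add_le_add_left h2
  · have tri : d (g • y) t ≤ d y t + d t (g • t) := by
      calc d (g • y) t ≤ d (g • y) (g • t) + d (g • t) t := ht.metric.triangle _ _ _
        _ = d y t + d t (g • t) := by rw [hiso g y t, dsy ht (g • t) t]
    have h2 : d y (g • y) + d y (g • y) + d t y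
        ≤ d y (g • y) + (d y t + d t (g • t)) := le_trans h (add_le_add_right tri _)
    have e1 : d y (g • y) + d y (g • y) + d t y
        = (d y (g • y) + d t y) + d y (g • y) := by abel
    have e2 : d y (g • y) + (d y t + d t (g • t))
        = (d y (g • y) + d t y) + d t (g • t) := by rw [dsy ht y t]; abel
    rw [e1, e2] at h2
    exact le_of_add_le_add_left h2

section LT

variable (ht : IsLambdaTree d) (hiso : ∀ (g : G) (x y : X), d (g • x) (g • y) = d x y)
  (hfree : ∀ g : G, g ≠ 1 → (∀ t : X, g • t ≠ t) ∧ ∀ t : X, (g * g) • t ≠ t)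
  (lT : G → Λ)
  (hlT : ∀ g : G, (∃ t : X, d t (g • t) = lT g) ∧ ∀ t : X, lT g ≤ d t (g • t))

include ht hiso lT hlT

theorem lT_nonneg (g : G) : 0 ≤ lT g := by
  obtain ⟨t, htw⟩ := (hlT g).1
  rw [← htw]
  exact dnn ht t (g • t)

include hfree in
theorem lT_pos {g : G} (hg : g ≠ 1) : 0 < lT g := by
  rcases lt_or_eq_of_le (lT_nonneg ht hiso lT hlT g) with h | h
  · exact h
  · exfalso
    obtain ⟨t, htw⟩ := (hlT g).1
    rw [← h] at htw
    exact (hfree g hg).1 t (deq ht htw).symm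

theorem lT_inv (g : G) : lT g⁻¹ = lT g := by
  have key : ∀ h : G, lT h⁻¹ ≤ lT h := by
    intro h
    obtain ⟨t, htw⟩ := (hlT h).1
    have e : d t (h⁻¹ • t) = lT h := by
      rw [dmove hiso h⁻¹ t t, inv_inv, dsy ht, htw]
    rw [← e]
    exact (hlT h⁻¹).2 t
  refine le_antisymm (key g) ?_
  have h2 := key g⁻¹
  rwa [inv_inv] at h2

theorem lT_conj (g w : G) : lT (w * g * w⁻¹) = lT g := by
  have key : ∀ (g w : G), lT (w * g * w⁻¹) ≤ lT g := by
    intro g w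
    obtain ⟨t, htw⟩ := (hlT g).1
    have e : d (w • t) ((w * g * w⁻¹) • (w • t)) = lT g := by
      rw [smul_smul, show w * g * w⁻¹ * w = w * g by group, mul_smul, hiso w t (g • t), htw]
    rw [← e]
    exact (hlT (w * g * w⁻¹)).2 (w • t)
  refine le_antisymm (key g w) ?_
  have h2 := key (w * g * w⁻¹) w⁻¹
  rwa [show w⁻¹ * (w * g * w⁻¹) * w⁻¹⁻¹ = g by group] at h2

include hfree in
theorem median_axis {g : G} {x q : X} (hg : g ≠ 1)
    (h1 : Btw d x q (g • x)) (h2 : Btw d x q (g⁻¹ • x)) (h3 : Btw d (g⁻¹ • x) q (g • x)) :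
    d q (g • q) = lT g ∧ d q ((g * g) • q) = lT g + lT g ∧
      d x q + d x q + lT g = d x (g • x) := by
  unfold Btw at h1 h2 h3
  have hl : d x (g • x) = d x q + d q (g • x) := h1.symm
  have hlinv : d x (g⁻¹ • x) = d x q + d q (g • x) := by rw [dinv ht hiso, hl]
  have hQm : d q (g⁻¹ • x) = d q (g • x) := add_left_cancel (h2.trans hlinv)
  have hX2' : d (g⁻¹ • x) (g • x) = d q (g • x) + d q (g • x) := by
    rw [← h3, dsy ht (g⁻¹ • x) q, hQm]
  have hX2 : d x ((g * g) • x) = d q (g • x) + d q (g • x) := by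
    have e := hiso g (g⁻¹ • x) (g • x)
    rw [smul_inv_smul, smul_smul] at e
    rw [e, hX2']
  have hgq_gx : d (g • q) (g • x) = d x q := by rw [hiso g q x, dsy ht q x]
  have hxgq : d x (g • q) = d q (g • x) := by
    rw [dmove hiso g x q, dsy ht (g⁻¹ • x) q, hQm]
  have hxgmq : d x (g⁻¹ • q) = d q (g • x) := by
    rw [dmove hiso g⁻¹ x q, inv_inv, dsy ht (g • x) q]
  have hbxq1 : d x (g • q) + d (g • q) (g • x) = d x (g • x) := by
    rw [hxgq, hgq_gx, hl, add_comm]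
  have hQQ1 : d q (g • q) = |d x q - d q (g • x)| := by
    have c := cmp ht (p := x) (r := g • x) (z₁ := q) (z₂ := g • q) h1 hbxq1
    rw [c, hxgq]
  have hgmqq : d (g⁻¹ • q) q = d q (g • q) := by
    have e := hiso g (g⁻¹ • q) q
    rw [smul_inv_smul] at e
    exact e.symm
  rcases lt_trichotomy (d x q) (d q (g • x)) with hlt | heq | hgt
  · -- main case : d x q < d q (g • x)
    have habs : d q (g • q) = d q (g • x) - d x q := by
      rw [hQQ1, abs_sub_comm, abs_of_nonneg (sub_nonneg.2 hlt.le)]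
    have e_l1 : d (g • x) x = d x q + d q (g • x) := by rw [dsy ht (g • x) x, hl]
    have e_l2 : d (g • x) ((g * g) • x) = d x q + d q (g • x) := by
      rw [mul_smul, hiso g x (g • x), hl]
    have g1 : gr d (g • x) x ((g * g) • x) = d x q + d x q := by
      unfold gr; rw [e_l1, e_l2, hX2]; abel
    have g2 : gr d (g • x) q x = d q (g • x) + d q (g • x) := by
      unfold gr; rw [dsy ht (g • x) q, e_l1, dsy ht q x]; abel
    have i1 := isoc ht (g • x) q ((g * g) • x) x
    rw [g2, gr_comm ht (g • x) ((g * g) • x) x, g1] at i1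
    rw [min_eq_right (add_le_add hlt.le hlt.le)] at i1
    have i2 := isoc ht (g • x) x ((g * g) • x) q
    rw [gr_comm ht (g • x) x q, g2, gr_comm ht (g • x) ((g * g) • x) q, g1]  at i2
    have hupper : gr d (g • x) q ((g * g) • x) ≤ d x q + d x q := by
      rcases min_le_iff.1 i2 with h | h
      · exact absurd h (not_le.2 (add_lt_add hlt hlt))
      · exact h
    have hγ : gr d (g • x) q ((g * g) • x) = d x q + d x q := le_antisymm hupper i1
    unfold gr at hγ
    rw [dsy ht (g • x) q, e_l2] at hγ
    have h6 := sub_eq_iff_eq_add.1 hγ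
    have eC : d q (g • x) + d q (g • x) = d q ((g * g) • x) + d x q := by
      have h7 : d x q + (d q (g • x) + d q (g • x))
          = d x q + (d q ((g * g) • x) + d x q) := by
        calc d x q + (d q (g • x) + d q (g • x))
            = d q (g • x) + (d x q + d q (g • x)) := by abel
          _ = d x q + d x q + d q ((g * g) • x) := h6
          _ = d x q + (d q ((g * g) • x) + d x q) := by abel
      exact add_left_cancel h7
    have e_shift : d (g • q) ((g * g) • q) = d q (g • q) := by
      rw [mul_smul, hiso g q (g • q)]
    have e_move : d ((g * g) • q) ((g * g) • x) = d x q := by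
      rw [hiso (g * g) q x, dsy ht q x]
    have hup : d q ((g * g) • q) ≤ d q (g • q) + d q (g • q) := by
      calc d q ((g * g) • q) ≤ d q (g • q) + d (g • q) ((g * g) • q) :=
            ht.metric.triangle _ _ _
        _ = d q (g • q) + d q (g • q) := by rw [e_shift]
    have hlow : d q (g • q) + d q (g • q) ≤ d q ((g * g) • q) := by
      rw [habs]
      have h8 : d q ((g * g) • x) ≤ d q ((g * g) • q) + d x q := by
        calc d q ((g * g) • x) ≤ d q ((g * g) • q) + d ((g * g) • q) ((g * g) • x) :=
              ht.metric.triangle _ _ _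
          _ = d q ((g * g) • q) + d x q := by rw [e_move]
      have h9 : d q (g • x) + d q (g • x) ≤ (d q ((g * g) • q) + d x q) + d x q := by
        rw [eC]; exact add_le_add_left h8 _
      have e10 : (d q (g • x) - d x q) + (d q (g • x) - d x q)
          = (d q (g • x) + d q (g • x)) - (d x q + d x q) := by abel
      rw [e10, sub_le_iff_le_add]
      calc d q (g • x) + d q (g • x) ≤ (d q ((g * g) • q) + d x q) + d x q := h9
        _ = d q ((g * g) • q) + (d x q + d x q) := by abel
    have hdb : d q ((g * g) • q) = d q (g • q) + d q (g • q) := le_antisymm hup hlow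
    obtain ⟨t₀, ht₀⟩ := (hlT g).1
    have hmin2 := min_of_doubling ht hiso g q t₀ hdb
    rw [ht₀] at hmin2
    have hfin : d q (g • q) = lT g := le_antisymm hmin2 ((hlT g).2 q)
    refine ⟨hfin, by rw [hdb, hfin], ?_⟩
    rw [← hfin, habs, hl]
    abel
  · -- d x q = d q (g • x) : contradiction with freeness
    exfalso
    have : d q (g • q) = 0 := by rw [hQQ1, heq, sub_self, abs_zero]
    exact (hfree g hg).1 q (deq ht this).symm
  · -- d q (g • x) < d x q : g would invert, contradiction
    exfalso
    have habs : d q (g • q) = d x q - d q (g • x) := by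
      rw [hQQ1, abs_of_nonneg (sub_nonneg.2 hgt.le)]
    have b1 : d x (g • q) + d (g • q) q = d x q := by
      rw [hxgq, dsy ht (g • q) q, habs]; abel
    have b2 : d x (g⁻¹ • q) + d (g⁻¹ • q) q = d x q := by
      rw [hxgmq, hgmqq, habs]; abel
    have c := cmp ht (p := x) (r := q) (z₁ := g • q) (z₂ := g⁻¹ • q) b1 b2
    rw [hxgq, hxgmq, sub_self, abs_zero] at c
    have e : g • (g • q) = g • (g⁻¹ • q) := congrArg (g • ·) (deq ht c)
    rw [smul_inv_smul, ← mul_smul] at e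
    exact (hfree g hg).2 q e

include hfree in
theorem doubling_of_min {g : G} {s : X} (hg : g ≠ 1) (hs : d s (g • s) = lT g) :
    d s ((g * g) • s) = lT g + lT g := by
  obtain ⟨m, hm1, hm2, hm3⟩ := exists_median ht s (g • s) (g⁻¹ • s)
  obtain ⟨hq1, hq2, hq3⟩ :=
    median_axis ht hiso hfree lT hlT hg hm1 hm2 (btw_symm ht hm3)
  rw [hs] at hq3
  have hm0 : d s m = 0 := by
    have h2 : d s m + d s m + lT g = 0 + 0 + lT g := by
      rw [hq3, zero_add, zero_add]
    have h3 := add_right_cancel h2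
    rw [add_zero] at h3
    have h4 := add_le_add_right (dnn ht s m) (d s m)
    rw [add_zero, h3] at h4
    exact le_antisymm h4 (dnn ht s m)
  have hms : m = s := (deq ht hm0).symm
  rw [hms] at hq2
  exact hq2

include hfree in
theorem dich {a : G} {p q : X} (ha : a ≠ 1) (hq : d q (a • q) = lT a) :
    Btw d p q (a • q) ∨ Btw d p q (a⁻¹ • q) := by
  have hdb := doubling_of_min ht hiso hfree lT hlT ha hq
  have hqinv : d q (a⁻¹ • q) = lT a := by rw [dinv ht hiso, hq]
  obtain ⟨m, hm1, hm2, hm3⟩ := exists_median ht p q (a • q)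
  by_cases hδ : d q m = 0
  · left
    have : m = q := (deq ht hδ).symm
    rwa [this] at hm2
  obtain ⟨m', hn1, hn2, hn3⟩ := exists_median ht p q (a⁻¹ • q)
  by_cases hδ' : d q m' = 0
  · right
    have : m' = q := (deq ht hδ').symm
    rwa [this] at hn2
  exfalso
  have hδpos : 0 < d q m := lt_of_le_of_ne (dnn ht q m) (Ne.symm hδ)
  have hδ'pos : 0 < d q m' := lt_of_le_of_ne (dnn ht q m') (Ne.symm hδ')
  have e0 : gr d q (a • q) (a⁻¹ • q) = 0 := by
    unfold gr
    have e : d (a • q) (a⁻¹ • q) = d q ((a * a) • q) := by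
      have e2 := hiso a (a⁻¹ • q) (a • q)
      rw [smul_inv_smul, smul_smul] at e2
      rw [dsy ht (a • q) (a⁻¹ • q), ← e2]
    rw [e, hdb, hq, hqinv]
    abel
  have e1 : gr d q m (a • q) = d q m + d q m := by
    unfold gr
    unfold Btw at hm3
    rw [← hm3]
    abel
  have e2 : gr d q m' (a⁻¹ • q) = d q m' + d q m' := by
    unfold gr
    unfold Btw at hn3
    rw [← hn3]
    abel
  have e3 : gr d q m p = d q m + d q m := by
    unfold gr
    unfold Btw at hm1
    rw [dsy ht q p, ← hm1, dsy ht m p, dsy ht m q]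
    abel
  have e4 : gr d q m' p = d q m' + d q m' := by
    unfold gr
    unfold Btw at hn1
    rw [dsy ht q p, ← hn1, dsy ht m' p, dsy ht m' q]
    abel
  have i1 := isoc ht q (a • q) (a⁻¹ • q) m
  rw [e0, gr_comm ht q (a • q) m, e1] at i1
  have j1 : gr d q (a⁻¹ • q) m = 0 := by
    rcases min_le_iff.1 i1 with h | h
    · exact absurd h (not_le.2 (add_pos hδpos hδpos))
    · exact le_antisymm h (gr_nonneg ht q (a⁻¹ • q) m)
  have i2 := isoc ht q m (a⁻¹ • q) m'
  rw [gr_comm ht q m (a⁻¹ • q), j1, gr_comm ht q (a⁻¹ • q) m', e2] at i2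
  have j2 : gr d q m m' ≤ 0 := by
    rcases min_le_iff.1 i2 with h | h
    · exact h
    · exact absurd h (not_le.2 (add_pos hδ'pos hδ'pos))
  have i3 := isoc ht q m m' p
  rw [e3, e4] at i3
  rcases min_le_iff.1 (le_trans i3 j2) with h | h
  · exact absurd h (not_le.2 (add_pos hδpos hδpos))
  · exact absurd h (not_le.2 (add_pos hδ'pos hδ'pos))

theorem tr {a : G} {p q r : X} (hapos : 0 < lT a)
    (hq : d q (a • q) = lT a) (hr : d r (a • r) = lT a)
    (h1 : Btw d p q (a • q)) (h2 : Btw d q r (a • r)) : Btw d p q r := by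
  by_cases hqr : q = r
  · subst hqr
    unfold Btw
    rw [dself ht, add_zero]
  have hqrpos : 0 < d q r :=
    lt_of_le_of_ne (dnn ht q r) (fun h => hqr (deq ht h.symm))
  have g1 : gr d q p (a • q) = 0 := by
    unfold gr
    unfold Btw at h1
    rw [dsy ht q p, ← h1]
    abel
  have i1 := isoc ht q p (a • q) r
  rw [g1] at i1
  rcases min_le_iff.1 i1 with h | h
  · exact btw_of_gr_zero ht (le_antisymm h (gr_nonneg ht q p r))
  · exfalso
    have hz := le_antisymm h (gr_nonneg ht q (a • q) r)
    have b1 : Btw d r q (a • q) := btw_symm ht (btw_of_gr_zero ht hz)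
    have b2 : Btw d r (a • r) (a • q) := by
      unfold Btw
      unfold Btw at b1
      rw [hr, hiso a r q, ← b1, hq, dsy ht r q]
      abel
    have c := cmp ht (p := r) (r := a • q) (z₁ := q) (z₂ := a • r) b1 b2
    rw [hr] at c
    unfold Btw at h2
    rw [hr] at h2
    rw [← h2, dsy ht r q] at c
    rcases abs_cases (d q r - lT a) with ⟨he, _⟩ | ⟨he, _⟩
    · rw [he] at c
      have h3 : d q r + (lT a + lT a) = d q r + 0 := by
        calc d q r + (lT a + lT a) = (d q r + lT a) + lT a := by abel
          _ = (d q r - lT a) + lT a := by rw [c]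
          _ = d q r + 0 := by abel
      have h4 := add_left_cancel h3
      exact absurd h4 (ne_of_gt (add_pos hapos hapos))
    · rw [he] at c
      have h3 : lT a + (d q r + d q r) = lT a + 0 := by
        calc lT a + (d q r + d q r) = (d q r + lT a) + d q r := by abel
          _ = (-(d q r - lT a)) + d q r := by rw [c]
          _ = lT a + 0 := by abel
      have h4 := add_left_cancel h3
      exact absurd h4 (ne_of_gt (add_pos hqrpos hqrpos))

include hfree in
theorem c_inner {a b : G} {y : X} (ha : a ≠ 1) (hb : b ≠ 1) (hcomm : a * b = b * a)
    (hy : d y (a • y) = lT a) (hori : Btw d y (b • y) (a • (b • y))) :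
    d y (b • y) = lT b := by
  have hby : d (b • y) (a • (b • y)) = lT a := by
    rw [smul_smul, hcomm, mul_smul, hiso b y (a • y), hy]
  have hb2 : d ((b * b) • y) (a • ((b * b) • y)) = lT a := by
    rw [smul_smul, show a * (b * b) = b * b * a by
      rw [← mul_assoc, hcomm, mul_assoc, hcomm, ← mul_assoc]]
    rw [mul_smul (b * b) a y, hiso (b * b) y (a • y), hy]
  have hori2 : Btw d (b • y) ((b * b) • y) (a • ((b * b) • y)) := by
    unfold Btw at hori ⊢
    have r1 : d (b • y) ((b * b) • y) = d y (b • y) := by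
      rw [mul_smul, hiso b y (b • y)]
    have r2 : d ((b * b) • y) (a • ((b * b) • y)) = d (b • y) (a • (b • y)) := by
      rw [hb2, hby]
    have r3 : d (b • y) (a • ((b * b) • y)) = d y (a • (b • y)) := by
      have hc1 : a * (b * b) = b * (a * b) := by
        calc a * (b * b) = (a * b) * b := (mul_assoc a b b).symm
          _ = (b * a) * b := by rw [hcomm]
          _ = b * (a * b) := mul_assoc b a b
      have e : a • ((b * b) • y) = b • (a • (b • y)) := by
        simp only [smul_smul]
        exact congrArg (fun z => z • y) hc1
      rw [e, hiso b y (a • (b • y))]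
    rw [r1, r2, r3]
    exact hori
  have htr := tr ht hiso lT hlT (lT_pos ht hiso hfree lT hlT ha) hby hb2 hori hori2
  unfold Btw at htr
  have rr : d (b • y) ((b * b) • y) = d y (b • y) := by
    rw [mul_smul, hiso b y (b • y)]
  rw [rr] at htr
  obtain ⟨t₀, ht₀⟩ := (hlT b).1
  have hm := min_of_doubling ht hiso b y t₀ htr.symm
  rw [ht₀] at hm
  exact le_antisymm hm ((hlT b).2 y)

include hfree in
theorem comm_transfer {a b : G} {y : X} (ha : a ≠ 1) (hb : b ≠ 1)
    (hcomm : a * b = b * a) (hy : d y (a • y) = lT a) : d y (b • y) = lT b := by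
  have hby : d (b • y) (a • (b • y)) = lT a := by
    rw [smul_smul, hcomm, mul_smul, hiso b y (a • y), hy]
  rcases dich ht hiso hfree lT hlT (p := y) ha hby with hori | hori
  · exact c_inner ht hiso hfree lT hlT ha hb hcomm hy hori
  · have ha' : a⁻¹ ≠ 1 := fun h => ha (by rwa [inv_eq_one] at h)
    have hcomm' : a⁻¹ * b = b * a⁻¹ := by
      have h := congrArg (fun z => a⁻¹ * z * a⁻¹) hcomm
      have h2 : b * a⁻¹ = a⁻¹ * b := by simpa [mul_assoc] using h
      exact h2.symm
    have hy' : d y (a⁻¹ • y) = lT a⁻¹ := by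
      rw [dinv ht hiso, hy, lT_inv ht hiso lT hlT a]
    exact c_inner ht hiso hfree lT hlT ha' hb hcomm' hy' hori

end LT

end Action

end S6

/-- `ℤⁿ` with the lexicographic order, as a linearly ordered abelian group. -/
noncomputable instance ZnLex.instLinearOrderedAddCommGroup (n : ℕ) :
    LinearOrder (Lex (Fin n → ℤ)) :=
  @Pi.Lex.linearOrder (Fin n) (fun _ => ℤ) _ Finite.to_wellFoundedLT _

/-- if `G` acts freely by isometries on a `ℤⁿ`-tree with base point
`x` and regular based length function `l g = d x (g • x)`, then every abelian
subgroup `A₀` of `G` is conjugate to an abelian subgroup all of whose nontrivial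
elements are cyclically reduced, i.e. have their axes through `x`
(`l a = lT a`). -/
theorem abelian_subgroup_conjugate_cyclically_reduced {n : ℕ} {G : Type*} [Group G]
    [MulAction G X]
    (d : X → X → Lex (Fin n → ℤ))
    (htree : IsLambdaTree d)
    (hiso : ∀ (g : G) (x y : X), d (g • x) (g • y) = d x y)
    (hfree : ∀ g : G, g ≠ 1 → (∀ t : X, g • t ≠ t) ∧ ∀ t : X, (g * g) • t ≠ t)
    (x : X)
    (lT : G → Lex (Fin n → ℤ))
    (hlT : ∀ g : G, (∃ t : X, d t (g • t) = lT g) ∧ ∀ t : X, lT g ≤ d t (g • t))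
    (hreg : ∀ g f : G, ∃ u g₁ f₁ : G,
      g = u * g₁ ∧ d x (g • x) = d x (u • x) + d x (g₁ • x) ∧
      f = u * f₁ ∧ d x (f • x) = d x (u • x) + d x (f₁ • x) ∧
      2 • d x (u • x) = d x (g • x) + d x (f • x) - d x ((g⁻¹ * f) • x))
    (A₀ : Subgroup G) (hab : ∀ a ∈ A₀, ∀ b ∈ A₀, a * b = b * a) :
    ∃ w : G, ∀ a ∈ A₀, a ≠ 1 → d x ((w * a * w⁻¹) • x) = lT (w * a * w⁻¹) := by
  classical
  by_cases hA : ∃ a ∈ A₀, a ≠ 1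
  · obtain ⟨a₀, ha₀A, ha₀⟩ := hA
    obtain ⟨u, g₁, f₁, e1, e2, e3, e4, e5⟩ := hreg a₀ a₀⁻¹
    have h1 : S6.Btw d x (u • x) (a₀ • x) := by
      unfold S6.Btw
      have r : d (u • x) (a₀ • x) = d x (g₁ • x) := by
        conv_lhs => rw [e1]
        rw [mul_smul, hiso u x (g₁ • x)]
      rw [r, ← e2]
    have h2 : S6.Btw d x (u • x) (a₀⁻¹ • x) := by
      unfold S6.Btw
      have r : d (u • x) (a₀⁻¹ • x) = d x (f₁ • x) := by
        conv_lhs => rw [e3]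
        rw [mul_smul, hiso u x (f₁ • x)]
      rw [r, ← e4]
    have h3 : S6.Btw d (a₀⁻¹ • x) (u • x) (a₀ • x) := by
      unfold S6.Btw
      unfold S6.Btw at h1 h2
      have eM : d (a₀⁻¹ • x) (a₀ • x) = d x ((a₀⁻¹ * a₀⁻¹) • x) := by
        have e := hiso a₀ (a₀⁻¹ • x) (a₀ • x)
        rw [smul_inv_smul, smul_smul] at e
        rw [← e, ← mul_inv_rev, S6.dinv htree hiso]
      have e5' : d x (u • x) + d x (u • x)
          = d x (a₀ • x) + d x (a₀⁻¹ • x) - d x ((a₀⁻¹ * a₀⁻¹) • x) := by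
        rw [← two_nsmul]
        exact e5
      rw [S6.dsy htree (a₀⁻¹ • x) (u • x), eM]
      calc d (u • x) (a₀⁻¹ • x) + d (u • x) (a₀ • x)
          = (d x (u • x) + d (u • x) (a₀⁻¹ • x)) + (d x (u • x) + d (u • x) (a₀ • x))
            - (d x (u • x) + d x (u • x)) := by abel
        _ = d x (a₀⁻¹ • x) + d x (a₀ • x)
            - (d x (a₀ • x) + d x (a₀⁻¹ • x) - d x ((a₀⁻¹ * a₀⁻¹) • x)) := by
            rw [h1, h2, e5']
        _ = d x ((a₀⁻¹ * a₀⁻¹) • x) := by abel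
    obtain ⟨hy, -, -⟩ := S6.median_axis htree hiso hfree lT hlT ha₀ h1 h2 h3
    refine ⟨u⁻¹, fun a haA hne => ?_⟩
    have hconj : lT (u⁻¹ * a * u⁻¹⁻¹) = lT a := S6.lT_conj htree hiso lT hlT a u⁻¹
    have hdist : d x ((u⁻¹ * a * u⁻¹⁻¹) • x) = d (u • x) (a • (u • x)) := by
      rw [inv_inv]
      have e := hiso u x ((u⁻¹ * a * u) • x)
      rw [smul_smul, show u * (u⁻¹ * a * u) = a * u by group, mul_smul] at e
      exact e.symm
    rw [hdist, hconj]
    exact S6.comm_transfer htree hiso hfree lT hlT ha₀ hne (hab a₀ ha₀A a haA) hy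
  · push_neg at hA
    exact ⟨1, fun a haA hne => absurd (hA a haA) hne⟩
end
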